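/- arXiv:2407.08729 — 2 statements merged into one kernel-verified Lean document; each statement's English description precedes it below -/
import Mathlib

section
/- (Output bi-equivariance of the channel-wise pairing map b.) Let C ≥ 1, let f_x, f_y : Fin C → ℝ³ with f_x c ≠ 0 and f_y c ≠ 0 for every channel c, and let ψ : (Fin C → ℝ) → (Fin C → ℝ) be any function. Define b(f_x, f_y) c = ψ(fun c' ↦ ‖f_x c' ⊗ f_y c'‖_F) c • ((f_x c ⊗ f_y c) / ‖f_x c ⊗ f_y c‖_F). Then for all R_x, R_y ∈ SO(3) and every channel c: b(fun c' ↦ R_x *ᵥ f_x c', fun c' ↦ R_y *ᵥ f_y c') c = R_x * b(f_x, f_y) c * R_yᵀ. -/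
/-- The Frobenius norm of a 3×3 real matrix: `‖F‖_F = √(Σᵢⱼ Fᵢⱼ²)`. -/
noncomputable def frobNorm (F : Matrix (Fin 3) (Fin 3) ℝ) : ℝ :=
  Real.sqrt (∑ i, ∑ j, (F i j) ^ 2)

lemma vecMulVec_mulVec (R S : Matrix (Fin 3) (Fin 3) ℝ) (u v : Fin 3 → ℝ) :
    Matrix.vecMulVec (R.mulVec u) (S.mulVec v)
      = R * Matrix.vecMulVec u v * S.transpose := by
  ext i j
  simp [Matrix.vecMulVec_apply, Matrix.mul_apply, Matrix.mulVec, dotProduct,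
    Finset.sum_mul, Finset.mul_sum]
  exact Finset.sum_congr rfl fun k _ => Finset.sum_congr rfl fun l _ => by ring

lemma frobNorm_eq_trace (M : Matrix (Fin 3) (Fin 3) ℝ) :
    frobNorm M = Real.sqrt (Matrix.trace (M.transpose * M)) := by
  unfold frobNorm
  congr 1
  simp only [Matrix.trace, Matrix.mul_apply, Matrix.diag, Matrix.transpose_apply, sq]
  rw [Finset.sum_comm]

lemma frobNorm_conj (R S M : Matrix (Fin 3) (Fin 3) ℝ)
    (hR : R.transpose * R = 1) (hS : S.transpose * S = 1) :
    frobNorm (R * M * S.transpose) = frobNorm M := by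
  rw [frobNorm_eq_trace, frobNorm_eq_trace]
  congr 1
  have hS' : S * S.transpose = 1 := by
    rw [mul_eq_one_comm] at hS; exact hS
  have : (R * M * S.transpose).transpose * (R * M * S.transpose)
      = S * (M.transpose * M) * S.transpose := by
    simp only [Matrix.transpose_mul, Matrix.transpose_transpose]
    calc S * (M.transpose * R.transpose) * (R * M * S.transpose)
        = S * (M.transpose * ((R.transpose * R) * (M * S.transpose))) := by
          simp [Matrix.mul_assoc]
      _ = S * (M.transpose * M) * S.transpose := by rw [hR]; simp [Matrix.mul_assoc]
  rw [this, Matrix.trace_mul_comm, ← Matrix.mul_assoc, hS, Matrix.one_mul]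

/-- Output bi-equivariance of the channel-wise pairing map
`b(f_x, f_y) c = ψ(fun c' ↦ ‖f_x c' ⊗ f_y c'‖_F) c • ((f_x c ⊗ f_y c) / ‖f_x c ⊗ f_y c‖_F)`:
for `R_x, R_y ∈ SO(3)`, `b(R_x f_x, R_y f_y) c = R_x * b(f_x, f_y) c * R_yᵀ`. -/
theorem pairing_map_output_biequivariant
    (C : ℕ) (hC : 1 ≤ C)
    (fx fy : Fin C → Fin 3 → ℝ) (hfx : ∀ c, fx c ≠ 0) (hfy : ∀ c, fy c ≠ 0)
    (ψ : (Fin C → ℝ) → (Fin C → ℝ))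
    (b : (Fin C → Fin 3 → ℝ) → (Fin C → Fin 3 → ℝ) → Fin C → Matrix (Fin 3) (Fin 3) ℝ)
    (hb : ∀ (u v : Fin C → Fin 3 → ℝ) (c : Fin C),
      b u v c = ψ (fun c' => frobNorm (Matrix.vecMulVec (u c') (v c'))) c
        • ((frobNorm (Matrix.vecMulVec (u c) (v c)))⁻¹ • Matrix.vecMulVec (u c) (v c)))
    (Rx Ry : Matrix (Fin 3) (Fin 3) ℝ)
    (hRx : Rx.transpose * Rx = 1) (hdetx : Rx.det = 1)
    (hRy : Ry.transpose * Ry = 1) (hdety : Ry.det = 1) :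
    ∀ c : Fin C,
      b (fun c' => Rx.mulVec (fx c')) (fun c' => Ry.mulVec (fy c')) c
        = Rx * b fx fy c * Ry.transpose := by
  intro c
  rw [hb, hb]
  have key : ∀ c' : Fin C,
      frobNorm (Matrix.vecMulVec (Rx.mulVec (fx c')) (Ry.mulVec (fy c')))
        = frobNorm (Matrix.vecMulVec (fx c') (fy c')) := by
    intro c'
    rw [vecMulVec_mulVec, frobNorm_conj _ _ _ hRx hRy]
  simp only [key]
  simp only [vecMulVec_mulVec]
  rw [Matrix.mul_smul, Matrix.smul_mul, Matrix.mul_smul, Matrix.smul_mul]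
end

section
/- (Proposition 5: equivariance of the alignment layer.) Let C ≥ 1, let f_x, f_y : Fin C → ℝ³ with f_x c ≠ 0 and f_y c ≠ 0 for every channel c, and let ψ : (Fin C → ℝ) → (Fin C → ℝ) be any function. Define b(f_x, f_y) c = ψ(fun c' ↦ ‖f_x c' ⊗ f_y c'‖_F) c • ((f_x c ⊗ f_y c) / ‖f_x c ⊗ f_y c‖_F), and the alignment layer a(f_x, f_y) c = (b(f_x, f_y) c) *ᵥ (f_y c). Then for all R_x, R_y ∈ SO(3) and every channel c: a(fun c' ↦ R_x *ᵥ f_x c', fun c' ↦ R_y *ᵥ f_y c') c = R_x *ᵥ (a(f_x, f_y) c). In particular the alignment layer is equivariant to rotations of its first input and invariant to rotations of its second input. -/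
open scoped Matrix

lemma rot_dot (R : Matrix (Fin 3) (Fin 3) ℝ) (hR : R.transpose * R = 1)
    (u v : Fin 3 → ℝ) : (R.mulVec u) ⬝ᵥ (R.mulVec v) = u ⬝ᵥ v := by
  rw [Matrix.dotProduct_mulVec, ← Matrix.vecMul_transpose, Matrix.vecMul_vecMul, hR, Matrix.vecMul_one]

lemma vecMulVec_mulVec' (w z x : Fin 3 → ℝ) :
    (Matrix.vecMulVec w z).mulVec x = (z ⬝ᵥ x) • w := by
  ext i
  simp [Matrix.mulVec, Matrix.vecMulVec, dotProduct, Finset.mul_sum, mul_assoc,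
    mul_comm, mul_left_comm]

lemma frob_vecMulVec (u v : Fin 3 → ℝ) :
    frobNorm (Matrix.vecMulVec u v) = Real.sqrt ((∑ i, u i ^ 2) * (∑ j, v j ^ 2)) := by
  unfold frobNorm
  congr 1
  rw [Finset.sum_mul_sum]
  simp [Matrix.vecMulVec, mul_pow]

lemma sum_sq_rot (R : Matrix (Fin 3) (Fin 3) ℝ) (hR : R.transpose * R = 1)
    (u : Fin 3 → ℝ) : ∑ i, (R.mulVec u i) ^ 2 = ∑ i, u i ^ 2 := by
  have h := rot_dot R hR u u
  simpa [dotProduct, pow_two] using h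

lemma frob_rot (Rx Ry : Matrix (Fin 3) (Fin 3) ℝ)
    (hRx : Rx.transpose * Rx = 1) (hRy : Ry.transpose * Ry = 1) (u v : Fin 3 → ℝ) :
    frobNorm (Matrix.vecMulVec (Rx.mulVec u) (Ry.mulVec v))
      = frobNorm (Matrix.vecMulVec u v) := by
  rw [frob_vecMulVec, frob_vecMulVec, sum_sq_rot Rx hRx, sum_sq_rot Ry hRy]


/-- Proposition 5: equivariance of the alignment layer
`a(f_x, f_y) c = b(f_x, f_y) c *ᵥ f_y c`, where
`b(f_x, f_y) c = ψ(fun c' ↦ ‖f_x c' ⊗ f_y c'‖_F) c • ((f_x c ⊗ f_y c) / ‖f_x c ⊗ f_y c‖_F)`.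
For all `R_x, R_y ∈ SO(3)`, `a(R_x f_x, R_y f_y) c = R_x *ᵥ a(f_x, f_y) c`: the alignment
layer is equivariant to rotations of its first input and invariant to rotations of its
second input. -/
theorem alignment_layer_equivariance
    (C : ℕ) (hC : 1 ≤ C)
    (fx fy : Fin C → Fin 3 → ℝ) (hfx : ∀ c, fx c ≠ 0) (hfy : ∀ c, fy c ≠ 0)
    (ψ : (Fin C → ℝ) → (Fin C → ℝ))
    (b : (Fin C → Fin 3 → ℝ) → (Fin C → Fin 3 → ℝ) → Fin C → Matrix (Fin 3) (Fin 3) ℝ)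
    (hb : ∀ (u v : Fin C → Fin 3 → ℝ) (c : Fin C),
      b u v c = ψ (fun c' => frobNorm (Matrix.vecMulVec (u c') (v c'))) c
        • ((frobNorm (Matrix.vecMulVec (u c) (v c)))⁻¹ • Matrix.vecMulVec (u c) (v c)))
    (a : (Fin C → Fin 3 → ℝ) → (Fin C → Fin 3 → ℝ) → Fin C → Fin 3 → ℝ)
    (ha : ∀ (u v : Fin C → Fin 3 → ℝ) (c : Fin C), a u v c = (b u v c).mulVec (v c))
    (Rx Ry : Matrix (Fin 3) (Fin 3) ℝ)
    (hRx : Rx.transpose * Rx = 1) (hdetx : Rx.det = 1)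
    (hRy : Ry.transpose * Ry = 1) (hdety : Ry.det = 1) :
    ∀ c : Fin C,
      a (fun c' => Rx.mulVec (fx c')) (fun c' => Ry.mulVec (fy c')) c
        = Rx.mulVec (a fx fy c) := by
  intro c
  have hfrob : (fun c' => frobNorm (Matrix.vecMulVec (Rx.mulVec (fx c')) (Ry.mulVec (fy c'))))
      = fun c' => frobNorm (Matrix.vecMulVec (fx c') (fy c')) := by
    funext c'
    exact frob_rot Rx Ry hRx hRy _ _
  rw [ha, ha, hb, hb, hfrob, frob_rot Rx Ry hRx hRy,
    Matrix.smul_mulVec, Matrix.smul_mulVec,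
    Matrix.smul_mulVec, Matrix.smul_mulVec,
    vecMulVec_mulVec', vecMulVec_mulVec', rot_dot Ry hRy,
    Matrix.mulVec_smul, Matrix.mulVec_smul, Matrix.mulVec_smul]
end
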